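/- The L.P.R. procedure does not satisfy independence of irrelevant alternatives: there exist two preference profiles (for 3 alternatives a, b, c and 4 voters) and alternatives a and b such that at the first profile b is an L.P.R. winner and a is not, every voter has the same relative ranking of a versus b in both profiles, yet at the second profile a is an L.P.R. winner. -/

import Mathlib

open Finset

attribute [local instance] Classical.propDecidable

noncomputable section

/-- A preference profile for `n` voters: each voter has a ballot, a list of
alternatives ordered from most preferred (head) to least preferred (last). -/
abbrev Profile (n : ℕ) (A : Type*) := Fin n → List A

variable {A : Type*} [DecidableEq A]

/-- A valid profile: every ballot is a strict linear order on the alternatives,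
i.e. a duplicate-free list containing every alternative. -/
def IsProfile {n : ℕ} (P : Profile n A) : Prop :=
  ∀ i, (P i).Nodup ∧ ∀ a : A, a ∈ P i

/-- The voter with ballot `l` prefers `x` to `y`. -/
def Prefers (l : List A) (x y : A) : Prop := l.idxOf x < l.idxOf y

/-- The number of voters who rank `a` last (at the bottom of their list). -/
def lastCount {n : ℕ} (P : Profile n A) (a : A) : ℕ :=
  (univ.filter fun i => (P i).getLast? = some a).card

/-- The number of voters who rank `a` first (at the top of their list). -/
def firstCount {n : ℕ} (P : Profile n A) (a : A) : ℕ :=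
  (univ.filter fun i => (P i).head? = some a).card

/-- The number of voters preferring `x` to `y`. -/
def prefCount {n : ℕ} (P : Profile n A) (x y : A) : ℕ :=
  (univ.filter fun i => Prefers (P i) x y).card

/-- `x` defeats `y` in a pairwise majority contest: strictly more voters
prefer `x` to `y` than prefer `y` to `x`. -/
def Defeats {n : ℕ} (P : Profile n A) (x y : A) : Prop :=
  prefCount P y x < prefCount P x y

/-- Condorcet's method: the winners are the alternatives defeated by no other alternative. -/
def CondorcetWinners {n : ℕ} (P : Profile n A) : Set A :=
  {a | ∀ b, ¬ Defeats P b a}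

/-- `a` is a Condorcet winner: it is the unique winner of Condorcet's method. -/
def IsCondorcetWinner {n : ℕ} (P : Profile n A) (a : A) : Prop :=
  CondorcetWinners P = {a}

/-- The bottom alternative of ballot `l` among the still-remaining alternatives `S`. -/
def bottomAmong (S : Finset A) (l : List A) : Option A :=
  (l.filter fun x => decide (x ∈ S)).getLast?

/-- The number of voters ranking `a` last among the remaining alternatives `S`. -/
def hLastCount {n : ℕ} (P : Profile n A) (S : Finset A) (a : A) : ℕ :=
  (univ.filter fun i => bottomAmong S (P i) = some a).card

/-- One round of the L.P.R. procedure: delete from `S` the alternative(s)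
currently appearing at the bottom of the largest number of lists,
i.e. keep those that are not maximal. -/
def lprStep {n : ℕ} (P : Profile n A) (S : Finset A) : Finset A :=
  S.filter fun a => ∃ b ∈ S, hLastCount P S a < hLastCount P S b

/-- Iterating the L.P.R. rounds; once a round would delete every remaining
alternative, the process stops (those alternatives are the ones deleted last). -/
def lprIter {n : ℕ} [Fintype A] (P : Profile n A) : ℕ → Finset A
  | 0 => Finset.univ
  | k + 1 =>
      let S := lprIter P k
      if lprStep P S = ∅ then S else lprStep P S

/-- L.P.R. winners: the alternative(s) deleted in the final round. -/
def LPRWinners {n : ℕ} [Fintype A] (P : Profile n A) : Finset A :=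
  lprIter P (Fintype.card A)

/-- the L.P.R. procedure does not satisfy independence of irrelevant
alternatives: there are two profiles (3 alternatives, 4 voters) and alternatives
`a`, `b` such that at the first profile `b` is an L.P.R. winner and `a` is not,
every voter has the same relative ranking of `a` versus `b` in both profiles,
yet at the second profile `a` is an L.P.R. winner. -/
theorem lpr_not_IIA :
    ∃ (P P' : Profile 4 (Fin 3)) (a b : Fin 3),
      IsProfile P ∧ IsProfile P' ∧ a ≠ b ∧
      b ∈ LPRWinners P ∧ a ∉ LPRWinners P ∧
      (∀ i, Prefers (P i) a b ↔ Prefers (P' i) a b) ∧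
      a ∈ LPRWinners P' := by
  refine ⟨![[0,1,2],[0,1,2],[1,2,0],[1,2,0]], ![[0,1,2],[0,1,2],[1,0,2],[1,0,2]], 0, 1, ?_, ?_, ?_, ?_, ?_, ?_, ?_⟩
  · intro i; fin_cases i <;> exact ⟨by decide, by decide⟩
  · intro i; fin_cases i <;> exact ⟨by decide, by decide⟩
  · decide
  · show _ ∈ lprIter _ 3
    simp only [lprIter, lprStep, hLastCount, bottomAmong, Finset.filter_congr_decidable]
    decide
  · show _ ∉ lprIter _ 3
    simp only [lprIter, lprStep, hLastCount, bottomAmong, Finset.filter_congr_decidable]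
    decide
  · intro i; fin_cases i <;> simp [Prefers]
  · show _ ∈ lprIter _ 3
    simp only [lprIter, lprStep, hLastCount, bottomAmong, Finset.filter_congr_decidable]
    decide
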